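/- Let G be a graph and k ≥ 1, c ≥ 2 integers. For any positive integer r, if G has a weak kr-guidance system of maximum outdegree at most c, then the k-distance power G^k has a weak r-guidance system of maximum outdegree at most 2c^k. -/

import Mathlib

open SimpleGraph

variable {V : Type*}

/-- `H` is a partial orientation of `G`: every directed edge of `H` projects to an edge of `G`. -/
def IsPartialOrientation (G : SimpleGraph V) (H : V → V → Prop) : Prop :=
  ∀ ⦃u v⦄, H u v → G.Adj u v

/-- `oball H v a` is the set of vertices reachable from `v` in `H` by a directed path
of length at most `a`. -/
def oball (H : V → V → Prop) (v : V) : ℕ → Set V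
  | 0 => {v}
  | a + 1 => oball H v a ∪ {w | ∃ x ∈ oball H v a, H x w}

/-- `gate G u v` is the set of neighbors of `u` at distance `dist u v - 1` from `v`,
i.e. the possible second vertices of shortest `u`-`v` paths. -/
def gate (G : SimpleGraph V) (u v : V) : Set V :=
  {y | G.Adj u y ∧ G.dist y v = G.dist u v - 1}

/-- `H` is a weak `r`-guidance system of `G`: for distinct `u,v` at distance `ℓ ≤ r`
there are `a + b = ℓ - 1` and an edge of `G` between `oball H u a` and `oball H v b`. -/
def IsWeakGuidance (G : SimpleGraph V) (H : V → V → Prop) (r : ℕ) : Prop :=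
  ∀ u v : V, u ≠ v → G.Reachable u v → G.dist u v ≤ r →
    ∃ a b : ℕ, a + b = G.dist u v - 1 ∧ ∃ x ∈ oball H u a, ∃ y ∈ oball H v b, G.Adj x y

/-- Gate formulation of weak `r`-guidance systems: for `u,v` at distance `ℓ` with
`2 ≤ ℓ ≤ r`, `u` has an outneighbor in `gate G u v` or `v` has one in `gate G v u`. -/
def IsWeakGuidanceGate (G : SimpleGraph V) (H : V → V → Prop) (r : ℕ) : Prop :=
  ∀ u v : V, 2 ≤ G.dist u v → G.dist u v ≤ r →
    (∃ y ∈ gate G u v, H u y) ∨ (∃ y ∈ gate G v u, H v y)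

/-- The outdegree of `u` in the partial orientation `H`. -/
noncomputable def outdeg (H : V → V → Prop) (u : V) : ℕ := {v | H u v}.ncard

/-- The `k`-distance power of `G`: two distinct vertices are adjacent iff their distance
in `G` is at most `k`. -/
def distPower (G : SimpleGraph V) (k : ℕ) : SimpleGraph V where
  Adj u v := u ≠ v ∧ G.Reachable u v ∧ G.dist u v ≤ k
  symm := by
    constructor
    intro u v h
    exact ⟨h.1.symm, h.2.1.symm, by rw [G.dist_comm]; exact h.2.2⟩
  loopless := by constructor; intro u h; exact h.1 rfl

section RChain

inductive RChain (R : V → V → Prop) : ℕ → V → V → Prop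
  | refl (u : V) : RChain R 0 u u
  | cons {u v w : V} {n : ℕ} : R u v → RChain R n v w → RChain R (n + 1) u w

variable {R S H : V → V → Prop} {m n : ℕ} {u v w z : V}

lemma RChain.snoc (h : RChain R n u v) (h2 : R v w) : RChain R (n + 1) u w := by
  induction h with
  | refl => exact .cons h2 (.refl _)
  | cons h1 _ ih => exact .cons h1 (ih h2)

lemma RChain.trans (h1 : RChain R m u v) (h2 : RChain R n v w) : RChain R (m + n) u w := by
  induction h1 with
  | refl => simpa using h2
  | cons ha _ ih => rw [Nat.succ_add]; exact .cons ha (ih h2)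

lemma RChain.split (h : RChain R (m + n) u w) : ∃ v, RChain R m u v ∧ RChain R n v w := by
  induction m generalizing u with
  | zero => exact ⟨u, .refl u, by simpa using h⟩
  | succ m ih =>
    rw [Nat.succ_add] at h
    cases h with
    | cons ha hb =>
      obtain ⟨v, h1, h2⟩ := ih hb
      exact ⟨v, .cons ha h1, h2⟩

lemma RChain.mono (hRS : ∀ a b, R a b → S a b) (h : RChain R n u v) : RChain S n u v := by
  induction h with
  | refl => exact .refl _
  | cons ha _ ih => exact .cons (hRS _ _ ha) ih

lemma RChain.rev {G : SimpleGraph V} (h : RChain G.Adj n u v) : RChain G.Adj n v u := by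
  induction h with
  | refl => exact .refl _
  | cons ha _ ih => exact ih.snoc ha.symm

lemma oball_mono (hmn : m ≤ n) : oball H u m ⊆ oball H u n := by
  induction hmn with
  | refl => exact subset_rfl
  | step _ ih => exact ih.trans (Set.subset_union_left)

lemma mem_oball_prepend (h : H u v) (hz : z ∈ oball H v n) : z ∈ oball H u (n + 1) := by
  induction n generalizing z with
  | zero => exact Or.inr ⟨u, rfl, hz ▸ h⟩
  | succ n ih =>
    rcases hz with hz | ⟨x, hx, hxz⟩
    · exact oball_mono (Nat.le_succ _) (ih hz)
    · exact Or.inr ⟨x, ih hx, hxz⟩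

lemma RChain.mem_oball (h : RChain H n u z) : z ∈ oball H u n := by
  induction h with
  | refl => rfl
  | cons ha _ ih => exact mem_oball_prepend ha ih

lemma mem_oball_iff : z ∈ oball H u n ↔ ∃ m ≤ n, RChain H m u z := by
  constructor
  · intro hz
    induction n generalizing z with
    | zero => obtain rfl : z = u := hz; exact ⟨0, le_refl _, .refl _⟩
    | succ n ih =>
      rcases hz with hz | ⟨x, hx, hxz⟩
      · obtain ⟨m, hm, hc⟩ := ih hz
        exact ⟨m, hm.trans (Nat.le_succ _), hc⟩
      · obtain ⟨m, hm, hc⟩ := ih hx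
        exact ⟨m + 1, by omega, hc.snoc hxz⟩
  · rintro ⟨m, hm, hc⟩
    exact oball_mono hm hc.mem_oball

variable {G : SimpleGraph V}

lemma RChain.reachable (h : RChain G.Adj n u v) : G.Reachable u v := by
  induction h with
  | refl => exact .refl _
  | cons ha _ ih => exact ha.reachable.trans ih

lemma RChain.dist_le (h : RChain G.Adj n u v) : G.dist u v ≤ n := by
  suffices h' : ∃ p : G.Walk u v, p.length ≤ n by
    obtain ⟨p, hp⟩ := h'
    exact (SimpleGraph.dist_le p).trans hp
  induction h with
  | refl => exact ⟨.nil, by simp⟩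
  | cons ha _ ih =>
    obtain ⟨p, hp⟩ := ih
    exact ⟨.cons ha p, by simpa using hp⟩

lemma rchain_of_dist (h : G.Reachable u v) : RChain G.Adj (G.dist u v) u v := by
  obtain ⟨p, hp⟩ := h.exists_walk_length_eq_dist
  rw [← hp]
  clear hp h
  induction p with
  | nil => exact .refl _
  | cons ha _ ih => exact .cons ha ih

end RChain

section power

variable {H : V → V → Prop} {G : SimpleGraph V} {k m n : ℕ} {u v z : V}

/-- compress a `G`-chain into a reflexive power chain -/
lemma rchain_power (hk : 1 ≤ k) (h : RChain G.Adj n u v) (hn : n ≤ k * m) :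
    RChain (fun a b => a = b ∨ (distPower G k).Adj a b) m u v := by
  induction m generalizing n u with
  | zero =>
    obtain rfl : n = 0 := by omega
    cases h; exact .refl _
  | succ m ih =>
    by_cases hn' : n ≤ k * m
    · exact .cons (Or.inl rfl) (ih h hn')
    · have hkm : k * (m + 1) = k * m + k := by ring
      have hs : n = min k n + (n - min k n) := by omega
      rw [hs] at h
      obtain ⟨y, h1, h2⟩ := h.split
      have hR : u = y ∨ (distPower G k).Adj u y := by
        by_cases huy : u = y
        · exact Or.inl huy
        · exact Or.inr ⟨huy, h1.reachable, h1.dist_le.trans (by omega)⟩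
      exact .cons hR (ih h2 (by omega))

lemma rchain_refl_elim {Q : V → V → Prop}
    (h : RChain (fun a b => a = b ∨ Q a b) m u v) : ∃ n ≤ m, RChain Q n u v := by
  induction h with
  | refl => exact ⟨0, le_refl _, .refl _⟩
  | cons ha _ ih =>
    obtain ⟨n, hn, hc⟩ := ih
    rcases ha with rfl | ha
    · exact ⟨n, by omega, hc⟩
    · exact ⟨n + 1, by omega, .cons ha hc⟩

lemma rchain_unpower (h : RChain (distPower G k).Adj m u v) :
    ∃ n ≤ k * m, RChain G.Adj n u v := by
  induction h with
  | refl => exact ⟨0, by simp, .refl _⟩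
  | @cons u x w m' ha _ ih =>
    obtain ⟨n, hn, hc⟩ := ih
    have h1 : RChain G.Adj (G.dist u x) u x := rchain_of_dist ha.2.1
    refine ⟨G.dist u x + n, ?_, h1.trans hc⟩
    have : G.dist u x ≤ k := ha.2.2
    have : k * (m' + 1) = k * m' + k := by ring
    omega

/-- the key compression lemma: `H`-balls of radius `≤ k*m` are contained in `F`-balls
of radius `m`, where `F u v ↔ u ≠ v ∧ v ∈ oball H u k`. -/
lemma oball_compress (hk : 1 ≤ k) (hn : n ≤ k * m)
    (hz : z ∈ oball H u n) : z ∈ oball (fun a b => a ≠ b ∧ b ∈ oball H a k) u m := by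
  induction m generalizing n u with
  | zero =>
    obtain rfl : n = 0 := by omega
    exact hz
  | succ m ih =>
    obtain ⟨s, hs, hc⟩ := mem_oball_iff.mp hz
    by_cases hsk : s ≤ k
    · have h1 : z ∈ oball H u k := oball_mono hsk hc.mem_oball
      by_cases huz : u = z
      · subst huz; exact oball_mono (Nat.zero_le _) rfl
      · have : z ∈ oball (fun a b => a ≠ b ∧ b ∈ oball H a k) u 1 :=
          Or.inr ⟨u, rfl, huz, h1⟩
        exact oball_mono (by omega) this
    · have hs' : s = k + (s - k) := by omega
      rw [hs'] at hc
      obtain ⟨y, h1, h2⟩ := hc.split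
      have hkm : k * (m + 1) = k * m + k := by ring
      have hzy : z ∈ oball (fun a b => a ≠ b ∧ b ∈ oball H a k) y m :=
        ih (n := s - k) (by omega) h2.mem_oball
      by_cases huy : u = y
      · subst huy; exact oball_mono (Nat.le_succ _) hzy
      · obtain ⟨t, ht, hc'⟩ := mem_oball_iff.mp hzy
        exact mem_oball_iff.mpr ⟨t + 1, by omega,
          .cons ⟨huy, h1.mem_oball⟩ hc'⟩

end power


lemma ncard_biUnion_le [Fintype V] {α : Type*} (s : Finset α) (f : α → Set V) :
    (⋃ x ∈ s, f x).ncard ≤ ∑ x ∈ s, (f x).ncard := by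
  classical
  induction s using Finset.induction_on with
  | empty => simp
  | insert a s hx ih =>
    rw [Finset.set_biUnion_insert, Finset.sum_insert hx]
    exact (Set.ncard_union_le _ _).trans (Nat.add_le_add le_rfl ih)

lemma oball_ncard_le [Fintype V] {H : V → V → Prop} {c : ℕ} (hc : 2 ≤ c)
    (hout : ∀ u, outdeg H u ≤ c) (u : V) : ∀ a, (oball H u a).ncard ≤ 2 * c ^ a := by
  classical
  have hlayer : ∀ a, (oball H u (a + 1) \ oball H u a).ncard ≤ c ^ (a + 1) := by
    intro a
    induction a with
    | zero =>
      have hsub : oball H u 1 \ oball H u 0 ⊆ {w | H u w} := by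
        rintro w ⟨hw, hnw⟩
        rcases hw with hw | ⟨x, hx, hxw⟩
        · exact absurd hw hnw
        · obtain rfl : x = u := hx
          exact hxw
      calc (oball H u 1 \ oball H u 0).ncard ≤ ({w | H u w}).ncard :=
            Set.ncard_le_ncard hsub (Set.toFinite _)
        _ ≤ c := hout u
        _ = c ^ 1 := (pow_one c).symm
    | succ a ih =>
      set S := oball H u (a + 1) \ oball H u a with hS
      have hsub : oball H u (a + 2) \ oball H u (a + 1) ⊆
          ⋃ x ∈ S.toFinite.toFinset, {w | H x w} := by
        rintro w ⟨hw, hnw⟩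
        rcases hw with hw | ⟨x, hx, hxw⟩
        · exact absurd hw hnw
        · exact Set.mem_biUnion ((S.toFinite.mem_toFinset).mpr
            ⟨hx, fun hxa => hnw (Or.inr ⟨x, hxa, hxw⟩)⟩) hxw
      calc (oball H u (a + 2) \ oball H u (a + 1)).ncard
          ≤ (⋃ x ∈ S.toFinite.toFinset, {w | H x w}).ncard :=
            Set.ncard_le_ncard hsub (Set.toFinite _)
        _ ≤ ∑ x ∈ S.toFinite.toFinset, ({w | H x w}).ncard := ncard_biUnion_le _ _
        _ ≤ ∑ _x ∈ S.toFinite.toFinset, c := Finset.sum_le_sum (fun x _ => hout x)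
        _ = S.toFinite.toFinset.card * c := by rw [Finset.sum_const, smul_eq_mul]
        _ = S.ncard * c := by rw [Set.ncard_eq_toFinset_card S S.toFinite]
        _ ≤ c ^ (a + 1) * c := Nat.mul_le_mul ih le_rfl
        _ = c ^ (a + 2) := by ring
  intro a
  induction a with
  | zero =>
    have : (oball H u 0).ncard = 1 := Set.ncard_singleton u
    rw [pow_zero]
    omega
  | succ a ih =>
    have hsub : oball H u (a + 1) ⊆ oball H u a ∪ (oball H u (a + 1) \ oball H u a) := by
      intro w hw
      by_cases h : w ∈ oball H u a
      exacts [Or.inl h, Or.inr ⟨hw, h⟩]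
    have h1 : 2 * c ^ a ≤ c * c ^ a := Nat.mul_le_mul hc le_rfl
    have h2 : c ^ (a + 1) = c * c ^ a := by ring
    calc (oball H u (a + 1)).ncard
        ≤ (oball H u a ∪ (oball H u (a + 1) \ oball H u a)).ncard :=
          Set.ncard_le_ncard hsub (Set.toFinite _)
      _ ≤ (oball H u a).ncard + (oball H u (a + 1) \ oball H u a).ncard :=
          Set.ncard_union_le _ _
      _ ≤ 2 * c ^ a + c ^ (a + 1) := Nat.add_le_add ih (hlayer a)
      _ ≤ 2 * c ^ (a + 1) := by omega


/-- If `G` has a weak `k·r`-guidance system of maximum outdegree at most `c` (`k ≥ 1`,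
`c ≥ 2`), then the `k`-distance power `G^k` has a weak `r`-guidance system of maximum
outdegree at most `2 c^k`. -/
theorem distPower_weakGuidance {V : Type*} [Fintype V] (G : SimpleGraph V)
    (k c r : ℕ) (hk : 1 ≤ k) (hc : 2 ≤ c) (hr : 1 ≤ r) (H : V → V → Prop)
    (hpo : IsPartialOrientation G H) (hw : IsWeakGuidance G H (k * r))
    (hout : ∀ u, outdeg H u ≤ c) :
    ∃ F : V → V → Prop, IsPartialOrientation (distPower G k) F ∧
      IsWeakGuidance (distPower G k) F r ∧ ∀ u, outdeg F u ≤ 2 * c ^ k := by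
  classical
  set F : V → V → Prop := fun a b => a ≠ b ∧ b ∈ oball H a k with hF
  have hFpo : IsPartialOrientation (distPower G k) F := by
    rintro u v ⟨hne, hv⟩
    obtain ⟨n, hn, hc'⟩ := mem_oball_iff.mp hv
    have hcG := hc'.mono (fun a b h => hpo h)
    exact ⟨hne, hcG.reachable, hcG.dist_le.trans hn⟩
  refine ⟨F, hFpo, ?_, ?_⟩
  · -- weak guidance
    intro u v hne hreach hLr
    set L := (distPower G k).dist u v with hL
    have hL1 : 1 ≤ L := hreach.pos_dist_of_ne hne
    rcases eq_or_lt_of_le hL1 with hL1' | hL2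
    · have hadj : (distPower G k).Adj u v := SimpleGraph.dist_eq_one_iff_adj.mp hL1'.symm
      exact ⟨0, 0, by omega, u, rfl, v, rfl, hadj⟩
    · -- L ≥ 2
      have hc0 : RChain (distPower G k).Adj L u v := rchain_of_dist hreach
      obtain ⟨n0, hn0, hc1⟩ := rchain_unpower hc0
      have hGreach : G.Reachable u v := hc1.reachable
      set ℓ := G.dist u v with hℓ
      have hℓu : ℓ ≤ k * L := le_trans hc1.dist_le hn0
      have hℓkr : ℓ ≤ k * r := hℓu.trans (Nat.mul_le_mul_left k hLr)
      have hmul : k * (L - 1) + k = k * L := by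
        have h' : L - 1 + 1 = L := by omega
        conv_rhs => rw [← h']
        rw [Nat.mul_succ]
      have hℓl : k * (L - 1) + 1 ≤ ℓ := by
        by_contra hcon
        push_neg at hcon
        have hGc : RChain G.Adj ℓ u v := rchain_of_dist hGreach
        have hP' := rchain_power (m := L - 1) hk hGc (by omega)
        obtain ⟨n, hn, hcP⟩ := rchain_refl_elim hP'
        have := hcP.dist_le
        omega
      obtain ⟨a, b, hab, x, hx, y, hy, hxy⟩ := hw u v hne hGreach hℓkr
      obtain ⟨q, mm, hq, hm⟩ : ∃ q mm, a = k * q + mm ∧ mm < k :=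
        ⟨a / k, a % k, (Nat.div_add_mod a k).symm, Nat.mod_lt a (by omega)⟩
      obtain ⟨A, B, hABsum, hKAa, hKsum, hkey⟩ :
          ∃ A B, A + B = L - 1 ∧ k * A ≤ a ∧ k * A + k * B = k * (L - 1) ∧
            (a - k * A) + (b - k * B) + 1 ≤ k := by
        by_cases hcase : q ≤ L - 1
        · refine ⟨q, L - 1 - q, by omega, by omega, ?_, ?_⟩
          · rw [← Nat.mul_add]
            congr 1
            omega
          · have h2 : k * q + k * (L - 1 - q) = k * (L - 1) := by
              rw [← Nat.mul_add]; congr 1; omega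
            omega
        · refine ⟨L - 1, 0, by omega, ?_, by simp, ?_⟩
          · have h3 : k * (L - 1) ≤ k * q := Nat.mul_le_mul_left k (by omega)
            omega
          · have h3 : k * (L - 1) ≤ k * q := Nat.mul_le_mul_left k (by omega)
            have h4 : k * 0 = 0 := Nat.mul_zero k
            omega
      obtain ⟨s, hs, csx⟩ := mem_oball_iff.mp hx
      obtain ⟨t, ht, cty⟩ := mem_oball_iff.mp hy
      have hssplit : s = min s (k * A) + (s - min s (k * A)) := by omega
      rw [hssplit] at csx
      obtain ⟨x', cx1, cx2⟩ := csx.split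
      have htsplit : t = min t (k * B) + (t - min t (k * B)) := by omega
      rw [htsplit] at cty
      obtain ⟨y', cy1, cy2⟩ := cty.split
      have hx'F : x' ∈ oball F u A :=
        oball_compress hk (n := min s (k * A)) (by omega) cx1.mem_oball
      have hy'F : y' ∈ oball F v B :=
        oball_compress hk (n := min t (k * B)) (by omega) cy1.mem_oball
      have cG1 : RChain G.Adj (s - min s (k * A)) x' x := cx2.mono (fun a b h => hpo h)
      have cG2 : RChain G.Adj (t - min t (k * B)) y' y := cy2.mono (fun a b h => hpo h)
      have cc : RChain G.Adj ((s - min s (k * A)) + 1 + (t - min t (k * B))) x' y' :=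
        (cG1.snoc hxy).trans cG2.rev
      have hdxy : G.dist x' y' ≤ k := cc.dist_le.trans (by omega)
      have hne' : x' ≠ y' := by
        intro hEq
        have cu : RChain G.Adj (min s (k * A)) u x' := cx1.mono (fun a b h => hpo h)
        have cv : RChain G.Adj (min t (k * B)) v y' := cy1.mono (fun a b h => hpo h)
        have cuv : RChain G.Adj (min s (k * A) + min t (k * B)) u v :=
          (hEq ▸ cu).trans cv.rev
        have := cuv.dist_le
        omega
      exact ⟨A, B, by omega, x', hx'F, y', hy'F, hne', cc.reachable, hdxy⟩
  · -- outdegree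
    intro u
    have hsub : {v | F u v} ⊆ oball H u k := fun v hv => hv.2
    calc outdeg F u ≤ (oball H u k).ncard := Set.ncard_le_ncard hsub (Set.toFinite _)
      _ ≤ 2 * c ^ k := oball_ncard_le hc hout u k
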